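/- Let C be a triangulated category, R ⊆ C a rigid functorially finite subcategory, and G : C → Mod R the functor c ↦ C(−, Σc)|_R. For any module M admitting a projective presentation P_{r₁} → P_{r₀} → M → 0 with r₀, r₁ ∈ R, there exists an object z in (Σ⁻¹R) * R with Gz ≅ M. -/

import Mathlib

open CategoryTheory

section
variable {C : Type*} [Category C] [Preadditive C] [Linear ℂ C] [HasShift C ℤ]
  (R : Set C)

/-- The full subcategory on a set `R` of objects of `C`. -/
abbrev Subcat := ObjectProperty.FullSubcategory (fun x : C => x ∈ R)

/-- The category `Mod R` of `ℂ`-linear contravariant functors `R → Mod ℂ`. -/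
abbrev ModR := (Subcat R)ᵒᵖ ⥤ ModuleCat ℂ

/-- The functor `G : C → Mod R`, `c ↦ C(−, Σc)|_R`. -/
@[simps]
noncomputable def Gfun : C ⥤ ModR R where
  obj c :=
    { obj := fun r => ModuleCat.of ℂ (r.unop.obj ⟶ c⟦(1 : ℤ)⟧)
      map := fun {r r'} f => ModuleCat.ofHom (Linear.leftComp ℂ (c⟦(1 : ℤ)⟧) f.unop.hom)
      map_id := fun r => by ext g; exact Category.id_comp g
      map_comp := fun {r r' r''} f g => by ext h; exact Category.assoc _ _ _ }
  map {c c'} f :=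
    { app := fun r => ModuleCat.ofHom (Linear.rightComp ℂ _ (f⟦(1 : ℤ)⟧'))
      naturality := fun {r r'} g => by ext h; exact Category.assoc _ _ _ }
  map_id c := by
    apply NatTrans.ext; funext r; ext h
    simp [Linear.rightComp]
  map_comp {c c' c''} f g := by
    apply NatTrans.ext; funext r; ext h
    simp only [Linear.rightComp, Functor.map_comp]
    exact (Category.assoc _ _ _).symm

end

/-- Descent of a linear map along a surjection whose kernel it kills. -/
lemma descend_exists {A B M : Type*} [AddCommGroup A] [AddCommGroup B] [AddCommGroup M]
    [Module ℂ A] [Module ℂ B] [Module ℂ M] (c : A →ₗ[ℂ] B) (p : A →ₗ[ℂ] M)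
    (hc : Function.Surjective c) (hle : LinearMap.ker c ≤ LinearMap.ker p) :
    ∃ q : B →ₗ[ℂ] M, ∀ a : A, q (c a) = p a := by
  refine ⟨((LinearMap.ker c).liftQ p hle).comp
    ((LinearMap.quotKerEquivOfSurjective c hc).symm : B →ₗ[ℂ] _), fun a => ?_⟩
  have h1 : (LinearMap.quotKerEquivOfSurjective c hc).symm (c a) =
      Submodule.Quotient.mk a := by
    apply (LinearMap.quotKerEquivOfSurjective c hc).injective
    rw [LinearEquiv.apply_symm_apply]
    simp [LinearMap.quotKerEquivOfSurjective]
  simp [h1]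

/-- Let `C` be a (pretriangulated) triangulated category, `R ⊆ C` a rigid
functorially finite subcategory (closed under sums and summands), and
`G : C → Mod R`, `c ↦ C(−, Σc)|_R`.  Every module `M` admitting a projective presentation
`P_{r₁} → P_{r₀} → M → 0` (with `P_r = R(−,r) = G(Σ⁻¹ r)`, `r₀, r₁ ∈ R`) is isomorphic to
`G z` for some `z` in `(Σ⁻¹ R) * R`, i.e. some `z` fitting into a distinguished triangle
`Σ⁻¹ r₀' → z → r₁'` with `r₀', r₁' ∈ R`. -/
theorem stmt_9 {C : Type*} [Category C] [Preadditive C] [Linear ℂ C]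
    [Limits.HasZeroObject C] [HasShift C ℤ]
    [∀ n : ℤ, (CategoryTheory.shiftFunctor C n).Additive] [Pretriangulated C]
    (R : Set C)
    (hrigid : ∀ r r' : C, r ∈ R → r' ∈ R → ∀ f : r ⟶ r'⟦(1 : ℤ)⟧, f = 0)
    (M : ModR R)
    (r₀ r₁ : C) (h₀ : r₀ ∈ R) (h₁ : r₁ ∈ R)
    (π : (Gfun R).obj (r₀⟦(-1 : ℤ)⟧) ⟶ M)
    (d : (Gfun R).obj (r₁⟦(-1 : ℤ)⟧) ⟶ (Gfun R).obj (r₀⟦(-1 : ℤ)⟧))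
    (hπ : ∀ r, Function.Surjective (π.app r))
    (hexact : ∀ r, LinearMap.range (d.app r).hom = LinearMap.ker (π.app r).hom) :
    ∃ (z : C) (r₀' r₁' : C) (_ : r₀' ∈ R) (_ : r₁' ∈ R)
      (g : r₀'⟦(-1 : ℤ)⟧ ⟶ z) (h : z ⟶ r₁') (w : r₁' ⟶ (r₀'⟦(-1 : ℤ)⟧)⟦(1 : ℤ)⟧),
      Pretriangulated.Triangle.mk g h w ∈ (Pretriangulated.distinguishedTriangles (C := C)) ∧
      Nonempty ((Gfun R).obj z ≅ M) := by
    classical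
  -- the canonical iso `r₁⟦-1⟧⟦1⟧ ≅ r₁`
  let ε : (r₁⟦(-1 : ℤ)⟧)⟦(1 : ℤ)⟧ ≅ r₁ :=
    (shiftFunctorCompIsoId C (-1) 1 (by norm_num)).app r₁
  -- the morphism inducing `d`
  let φ : (r₁⟦(-1 : ℤ)⟧)⟦(1 : ℤ)⟧ ⟶ (r₀⟦(-1 : ℤ)⟧)⟦(1 : ℤ)⟧ :=
    ε.hom ≫ d.app (Opposite.op ⟨r₁, h₁⟩) ε.inv
  have hd : ∀ (r' : (Subcat R)ᵒᵖ) (x : r'.unop.obj ⟶ (r₁⟦(-1 : ℤ)⟧)⟦(1 : ℤ)⟧),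
      d.app r' x = x ≫ φ := by
    intro r' x
    let u : r'.unop ⟶ (⟨r₁, h₁⟩ : Subcat R) := ObjectProperty.homMk (x ≫ ε.hom)
    have hnat := d.naturality u.op
    have h2 : d.app r' ((x ≫ ε.hom) ≫ ε.inv) =
        (x ≫ ε.hom) ≫ d.app (Opposite.op (⟨r₁, h₁⟩ : Subcat R)) ε.inv :=
      congrArg (fun q : ((Gfun R).obj (r₁⟦(-1 : ℤ)⟧)).obj (Opposite.op (⟨r₁, h₁⟩ : Subcat R)) ⟶
        ((Gfun R).obj (r₀⟦(-1 : ℤ)⟧)).obj r' => q ε.inv) hnat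
    have h1 : d.app r' x = d.app r' ((x ≫ ε.hom) ≫ ε.inv) := by
          rw [Category.assoc, ε.hom_inv_id, Category.comp_id]
    exact h1.trans (h2.trans (Category.assoc _ _ _))
  -- the preimage of `φ` under the shift
  let ψ : r₁⟦(-1 : ℤ)⟧ ⟶ r₀⟦(-1 : ℤ)⟧ := (shiftFunctor C (1 : ℤ)).preimage φ
  have hψ : ψ⟦(1 : ℤ)⟧' = φ := (shiftFunctor C (1 : ℤ)).map_preimage φ
  obtain ⟨z, g, w, hT⟩ := Pretriangulated.distinguished_cocone_triangle ψ
  set T := Pretriangulated.Triangle.mk ψ g w with hTdef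
  have hrot : T.rotate ∈ Pretriangulated.distinguishedTriangles :=
    Pretriangulated.rot_of_distTriang T hT
  have hψg : ψ ≫ g = 0 := Pretriangulated.comp_distTriang_mor_zero₁₂ T hT
  refine ⟨z, r₀, r₁, h₀, h₁, g, w ≫ ε.hom, ε.inv ≫ (-(ψ⟦(1 : ℤ)⟧')), ?_, ?_⟩
  · refine Pretriangulated.isomorphic_distinguished T.rotate hrot _ ?_
    refine Pretriangulated.Triangle.isoMk _ _ (Iso.refl _) (Iso.refl _) ε.symm ?_ ?_ ?_
    · simp [T, Pretriangulated.Triangle.rotate]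
      exact (Category.comp_id g).trans (Category.id_comp g).symm
    · simp [T, Pretriangulated.Triangle.rotate]
      exact (by rw [Category.assoc, ε.hom_inv_id, Category.comp_id] :
        (w ≫ ε.hom) ≫ ε.inv = w).trans (Category.id_comp w).symm
    · simp [T, Pretriangulated.Triangle.rotate]
      exact (by rw [CategoryTheory.Functor.map_id, Category.comp_id, Preadditive.comp_neg] :
        (-(ε.inv ≫ ψ⟦(1 : ℤ)⟧')) ≫ (𝟙 (r₀⟦(-1 : ℤ)⟧))⟦(1 : ℤ)⟧' = ε.inv ≫ (-(ψ⟦(1 : ℤ)⟧')))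
  · -- now build the iso `G z ≅ M`
    let c : (Gfun R).obj (r₀⟦(-1 : ℤ)⟧) ⟶ (Gfun R).obj z := (Gfun R).map g
    have hcapp : ∀ (r' : (Subcat R)ᵒᵖ) (x : r'.unop.obj ⟶ (r₀⟦(-1 : ℤ)⟧)⟦(1 : ℤ)⟧),
        c.app r' x = x ≫ g⟦(1 : ℤ)⟧' := fun _ _ => rfl
    have hrot3 : T.rotate.rotate.rotate ∈ Pretriangulated.distinguishedTriangles :=
      Pretriangulated.rot_of_distTriang _ (Pretriangulated.rot_of_distTriang _ hrot)
    have hrot4 : T.rotate.rotate.rotate.rotate ∈ Pretriangulated.distinguishedTriangles :=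
      Pretriangulated.rot_of_distTriang _ hrot3
    have hε1 : ε.hom⟦(1 : ℤ)⟧' ≫ ε.inv⟦(1 : ℤ)⟧' = 𝟙 _ := by
      rw [← Functor.map_comp, ε.hom_inv_id, CategoryTheory.Functor.map_id]
    -- surjectivity of `c` pointwise
    have hcsurj : ∀ r', Function.Surjective (c.app r') := by
      intro r' x
      change r'.unop.obj ⟶ z⟦(1 : ℤ)⟧ at x
      have hx : x ≫ (-(w⟦(1 : ℤ)⟧')) = 0 := by
        have h0 : x ≫ w⟦(1 : ℤ)⟧' ≫ ε.hom⟦(1 : ℤ)⟧' = 0 :=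
          hrigid r'.unop.obj r₁ r'.unop.property h₁ _
        have hw : x ≫ w⟦(1 : ℤ)⟧' = 0 := by
          calc x ≫ w⟦(1 : ℤ)⟧'
              = (x ≫ w⟦(1 : ℤ)⟧' ≫ ε.hom⟦(1 : ℤ)⟧') ≫ ε.inv⟦(1 : ℤ)⟧' := by
                simp only [Category.assoc, hε1, Category.comp_id]
            _ = 0 := by rw [h0, Limits.zero_comp]
        rw [Preadditive.comp_neg, hw, neg_zero]
      obtain ⟨y, hy⟩ := Pretriangulated.Triangle.coyoneda_exact₂ _ hrot4 x hx
      have hy' : x = y ≫ (-(g⟦(1 : ℤ)⟧')) := hy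
      refine ⟨-y, ?_⟩
      show (-y) ≫ g⟦(1 : ℤ)⟧' = x
      rw [hy']; exact (Preadditive.neg_comp _ _).trans (Preadditive.comp_neg _ _).symm
    -- kernel of `c` pointwise
    have hcker : ∀ r', LinearMap.ker (c.app r').hom ≤ LinearMap.ker (π.app r').hom := by
      intro r' x hx
      change r'.unop.obj ⟶ (r₀⟦(-1 : ℤ)⟧)⟦(1 : ℤ)⟧ at x
      have hx0 : x ≫ g⟦(1 : ℤ)⟧' = 0 := hx
      have hx' : x ≫ (-(g⟦(1 : ℤ)⟧')) = 0 := by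
        rw [Preadditive.comp_neg, hx0, neg_zero]
      obtain ⟨y, hy⟩ := Pretriangulated.Triangle.coyoneda_exact₂ _ hrot3 x hx'
      have hy' : x = y ≫ (-(ψ⟦(1 : ℤ)⟧')) := hy
      have hmem : x ∈ LinearMap.range (d.app r').hom := by
        refine ⟨-y, ?_⟩
        exact (hd r' (-y)).trans (by
          rw [← hψ, hy']; exact (Preadditive.neg_comp _ _).trans (Preadditive.comp_neg _ _).symm)
      rw [hexact r'] at hmem
      exact hmem
    -- descend π along c pointwise
    have key : ∀ r', ∃ q : ((Gfun R).obj z).obj r' ⟶ M.obj r',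
        ∀ a, q (c.app r' a) = π.app r' a := fun r' =>
      let ⟨q, hq⟩ := descend_exists (c.app r').hom (π.app r').hom (hcsurj r') (hcker r')
      ⟨ModuleCat.ofHom q, hq⟩
    choose τapp hτ using key
    have hnatτ : ∀ {r' r'' : (Subcat R)ᵒᵖ} (f : r' ⟶ r''),
        ((Gfun R).obj z).map f ≫ τapp r'' = τapp r' ≫ M.map f := by
      intro r' r'' f
      apply ModuleCat.hom_ext
      apply LinearMap.ext
      intro x
      obtain ⟨a, rfl⟩ := hcsurj r' x
      have h1 : c.app r'' (((Gfun R).obj (r₀⟦(-1 : ℤ)⟧)).map f a) =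
          ((Gfun R).obj z).map f (c.app r' a) :=
        congrArg (fun q : ((Gfun R).obj (r₀⟦(-1 : ℤ)⟧)).obj r' ⟶
          ((Gfun R).obj z).obj r'' => q a) (c.naturality f)
      have h2 : π.app r'' (((Gfun R).obj (r₀⟦(-1 : ℤ)⟧)).map f a) =
          M.map f (π.app r' a) :=
        congrArg (fun q : ((Gfun R).obj (r₀⟦(-1 : ℤ)⟧)).obj r' ⟶
          M.obj r'' => q a) (π.naturality f)
      show τapp r'' (((Gfun R).obj z).map f (c.app r' a)) = M.map f (τapp r' (c.app r' a))
      rw [← h1, hτ r'', h2, hτ r']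
    let τ : (Gfun R).obj z ⟶ M := { app := τapp, naturality := fun _ _ f => hnatτ f }
    have hbij : ∀ r', Function.Bijective (τapp r') := by
      intro r'
      constructor
      · intro b b' hb
        obtain ⟨a, rfl⟩ := hcsurj r' b
        obtain ⟨a', rfl⟩ := hcsurj r' b'
        rw [hτ r', hτ r'] at hb
        have hker : a - a' ∈ LinearMap.ker (π.app r').hom := by
          rw [LinearMap.mem_ker, map_sub, hb, sub_self]
        rw [← hexact r'] at hker
        obtain ⟨y, hy⟩ := hker
        change r'.unop.obj ⟶ (r₁⟦(-1 : ℤ)⟧)⟦(1 : ℤ)⟧ at y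
        have hc0 : c.app r' (a - a') = 0 := by
          rw [← hy]
          show d.app r' y ≫ g⟦(1 : ℤ)⟧' = 0
          rw [hd r' y, ← hψ, Category.assoc, ← Functor.map_comp, hψg,
            Functor.map_zero, Limits.comp_zero]
        rw [map_sub, sub_eq_zero] at hc0
        rw [hc0]
      · intro m
        obtain ⟨a, ha⟩ := hπ r' m
        exact ⟨c.app r' a, by rw [hτ r', ha]⟩
    haveI : ∀ r', IsIso (τ.app r') := fun r' =>
      (ConcreteCategory.isIso_iff_bijective (τ.app r')).2 (hbij r')
    haveI : IsIso τ := NatIso.isIso_of_isIso_app τ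
    exact ⟨asIso τ⟩
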